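/- Assume {u ∈ ℝ^J : Bu ≥ b} is nonempty and bounded. Let Γ ≥ 0, d_1,…,d_K ∈ ℝ^J, s ∈ {−1,1}^K, and y ∈ ℝ^J. Then, in the extended reals, sup{ u·y : u ∈ ℝ^J for which there exists ε ∈ ℝ^K with ε ≥ 0, Σ_κ ε_κ ≤ Γ, s_κ (u·d_κ) + ε_κ ≥ 0 for all κ, and Bu ≥ b } = inf{ b·β + Γμ : α ∈ ℝ^K with α ≤ 0, β ∈ ℝ^M with β ≤ 0, μ ∈ ℝ with μ ≥ 0, Σ_κ s_κ α_κ d_κ + Bᵀβ = y, and α_κ + μ ≥ 0 for all κ }. In particular, this strong linear-programming duality holds even when the primal feasible set is empty, in which case both sides equal −∞. -/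

import Mathlib

open scoped BigOperators
open scoped InnerProductSpace

noncomputable section

section Farkas

variable {E : Type*} [NormedAddCommGroup E] [NormedSpace ℝ E] [FiniteDimensional ℝ E]

lemma coneSet_isClosed : ∀ (n : ℕ) (v : Fin n → E),
    IsClosed {x : E | ∃ l : Fin n → ℝ, (∀ i, 0 ≤ l i) ∧ x = ∑ i, l i • v i} := by
  intro n
  induction n using Nat.strong_induction_on with
  | _ n ih =>
  intro v
  by_cases hLI : LinearIndependent ℝ v
  · let f : (Fin n → ℝ) →ₗ[ℝ] E :=
      { toFun := fun l => ∑ i, l i • v i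
        map_add' := by intro a b; simp [add_smul, Finset.sum_add_distrib]
        map_smul' := by intro c a; simp [smul_smul, Finset.smul_sum] }
    have hker : LinearMap.ker f = ⊥ := by
      rw [LinearMap.ker_eq_bot']
      intro m hm
      exact funext (Fintype.linearIndependent_iff.1 hLI m hm)
    have hce := LinearMap.isClosedEmbedding_of_injective (f := f) hker
    have heq : {x : E | ∃ l : Fin n → ℝ, (∀ i, 0 ≤ l i) ∧ x = ∑ i, l i • v i}
        = f '' {l | ∀ i, 0 ≤ l i} := by
      ext x
      exact ⟨fun ⟨l, hl, hx⟩ => ⟨l, hl, hx.symm⟩, fun ⟨l, hl, hx⟩ => ⟨l, hl, hx.symm⟩⟩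
    rw [heq]
    refine hce.isClosedMap _ ?_
    have : {l : Fin n → ℝ | ∀ i, 0 ≤ l i} = ⋂ i, (fun l : Fin n → ℝ => l i) ⁻¹' Set.Ici 0 := by
      ext l; simp [Set.mem_iInter]
    rw [this]
    exact isClosed_iInter fun i => isClosed_Ici.preimage (continuous_apply i)
  · obtain ⟨g₀, hg₀, i₁, hi₁⟩ := Fintype.not_linearIndependent_iff.1 hLI
    match n, v, g₀, i₁, hg₀, hi₁, ih with
    | Nat.succ m, v, g₀, i₁, hg₀, hi₁, ih =>
    have key : ∀ (g : Fin (m+1) → ℝ), (∑ i, g i • v i = 0) → (∃ i, 0 < g i) →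
        ∀ x (l : Fin (m+1) → ℝ), (∀ i, 0 ≤ l i) → x = ∑ i, l i • v i →
        ∃ i₀ : Fin (m+1), ∃ l' : Fin (m+1) → ℝ,
          (∀ i, 0 ≤ l' i) ∧ l' i₀ = 0 ∧ x = ∑ i, l' i • v i := by
      intro g hsum hpos x l hl hx
      classical
      obtain ⟨ip, hip⟩ := hpos
      have hfs : (Finset.univ.filter (fun i => 0 < g i)).Nonempty :=
        ⟨ip, by simpa using hip⟩
      obtain ⟨i₀, hi₀mem, hi₀min⟩ := Finset.exists_min_image _ (fun i => l i / g i) hfs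
      have hgi₀ : 0 < g i₀ := by simpa using hi₀mem
      set t : ℝ := l i₀ / g i₀ with ht
      have ht0 : 0 ≤ t := div_nonneg (hl i₀) hgi₀.le
      have htmul : t * g i₀ = l i₀ := div_mul_cancel₀ _ hgi₀.ne'
      refine ⟨i₀, fun i => l i - t * g i, fun i => ?_, by show l i₀ - t * g i₀ = 0; linarith, ?_⟩
      · show 0 ≤ l i - t * g i
        rcases le_or_gt (g i) 0 with h | h
        · nlinarith [hl i, mul_nonneg ht0 (neg_nonneg.2 h)]
        · have h2 : t ≤ l i / g i := hi₀min i (by simpa using h)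
          have := (le_div_iff₀ h).1 h2
          linarith
      · have : ∑ i, (l i - t * g i) • v i
            = (∑ i, l i • v i) - t • (∑ i, g i • v i) := by
          rw [Finset.smul_sum, ← Finset.sum_sub_distrib]
          congr 1; ext i; rw [sub_smul, smul_smul]
        rw [this, hsum, smul_zero, sub_zero, hx]
    -- the set is the union over i₀ of cones with one generator removed
    have hunion : {x : E | ∃ l : Fin (m+1) → ℝ, (∀ i, 0 ≤ l i) ∧ x = ∑ i, l i • v i}
        = ⋃ i₀ : Fin (m+1), {x : E | ∃ l' : Fin m → ℝ, (∀ j, 0 ≤ l' j) ∧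
            x = ∑ j, l' j • v (i₀.succAbove j)} := by
      ext x
      simp only [Set.mem_iUnion, Set.mem_setOf_eq]
      constructor
      · rintro ⟨l, hl, rfl⟩
        have hg' : ∃ g : Fin (m+1) → ℝ, (∑ i, g i • v i = 0) ∧ ∃ i, 0 < g i := by
          rcases lt_or_gt_of_ne hi₁ with h | h
          · exact ⟨-g₀, by simpa using hg₀, i₁, by simpa using h⟩
          · exact ⟨g₀, hg₀, i₁, h⟩
        obtain ⟨g, hsum, hpos⟩ := hg'
        obtain ⟨i₀, l', hl', hz, hx⟩ := key g hsum hpos _ l hl rfl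
        refine ⟨i₀, fun j => l' (i₀.succAbove j), fun j => hl' _, ?_⟩
        rw [hx, Fin.sum_univ_succAbove (fun i => l' i • v i) i₀, hz, zero_smul, zero_add]
      · rintro ⟨i₀, l', hl', rfl⟩
        refine ⟨Fin.insertNth i₀ 0 l', ?_, ?_⟩
        · intro i
          rcases eq_or_ne i i₀ with h | h
          · simp [h]
          · obtain ⟨j, rfl⟩ := Fin.exists_succAbove_eq h
            simpa using hl' j
        · rw [Fin.sum_univ_succAbove (fun i => (Fin.insertNth (α := fun _ => ℝ) i₀ 0 l') i • v i) i₀]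
          simp
    rw [hunion]
    exact isClosed_iUnion_of_finite fun i₀ => ih m (Nat.lt_succ_self m) _

variable {H : Type*} [NormedAddCommGroup H] [InnerProductSpace ℝ H] [FiniteDimensional ℝ H]

lemma farkas {n : ℕ} (v : Fin n → H) (c : H)
    (h : ∀ u : H, (∀ i, 0 ≤ ⟪v i, u⟫_ℝ) → 0 ≤ ⟪c, u⟫_ℝ) :
    ∃ l : Fin n → ℝ, (∀ i, 0 ≤ l i) ∧ c = ∑ i, l i • v i := by
  by_contra hc
  let K : ConvexCone ℝ H :=
    { carrier := {x : H | ∃ l : Fin n → ℝ, (∀ i, 0 ≤ l i) ∧ x = ∑ i, l i • v i}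
      smul_mem' := by
        rintro t ht x ⟨l, hl, rfl⟩
        exact ⟨t • l, fun i => mul_nonneg ht.le (hl i), by
          simp [Finset.smul_sum, smul_smul]⟩
      add_mem' := by
        rintro x ⟨l, hl, rfl⟩ z ⟨l', hl', rfl⟩
        exact ⟨l + l', fun i => add_nonneg (hl i) (hl' i), by
          simp [add_smul, Finset.sum_add_distrib]⟩ }
  have hne : (K : Set H).Nonempty := ⟨0, 0, fun i => le_refl 0, by simp⟩
  have hcl : IsClosed (K : Set H) := coneSet_isClosed n v
  have hcK : c ∉ K := fun ⟨l, hl, hx⟩ => hc ⟨l, hl, hx⟩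
  obtain ⟨y, hy1, hy2⟩ := ProperCone.hyperplane_separation' (E := H)
    ⟨K.toPointedCone (by exact ⟨fun i => 0, fun i => le_refl 0, by simp⟩), hcl⟩ (x₀ := c) hcK
  have hvy : ∀ i, 0 ≤ ⟪v i, y⟫_ℝ := by
    intro i
    refine hy1 (v i) ⟨fun j => if j = i then 1 else 0, fun j => by positivity, ?_⟩
    simp [ite_smul]
  have := h y hvy
  linarith

lemma farkas' {ι : Type*} [Fintype ι] (v : ι → H) (c : H)
    (h : ∀ u : H, (∀ i, 0 ≤ ⟪v i, u⟫_ℝ) → 0 ≤ ⟪c, u⟫_ℝ) :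
    ∃ l : ι → ℝ, (∀ i, 0 ≤ l i) ∧ c = ∑ i, l i • v i := by
  classical
  let e := (Fintype.equivFin ι).symm
  obtain ⟨l, hl, hc⟩ := farkas (v ∘ e) c (fun u hu => h u (fun i => by
    simpa using hu (e.symm i)))
  refine ⟨l ∘ e.symm, fun i => hl _, ?_⟩
  rw [hc]
  rw [← Equiv.sum_comp e (fun i => (l ∘ e.symm) i • v i)]
  simp

lemma gale {ι : Type*} [Fintype ι] (a : ι → H) (r : ι → ℝ)
    (h : ∀ z : H, ¬ (∀ i, r i ≤ ⟪a i, z⟫_ℝ)) :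
    ∃ l : ι → ℝ, (∀ i, 0 ≤ l i) ∧ (∑ i, l i • a i) = 0 ∧ (∑ i, l i * r i) = 1 := by
  let G := WithLp 2 (H × ℝ)
  let w : ι → G := fun i => WithLp.toLp 2 ((a i, -(r i)) : H × ℝ)
  let c : G := WithLp.toLp 2 ((0, -1) : H × ℝ)
  have hf : ∀ u : G, (∀ i, 0 ≤ ⟪w i, u⟫_ℝ) → 0 ≤ ⟪c, u⟫_ℝ := by
    intro u hu
    have hc : ⟪c, u⟫_ℝ = -u.ofLp.2 := by
      rw [WithLp.prod_inner_apply]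
      simp [c, RCLike.inner_apply]
    rw [hc, neg_nonneg]
    by_contra hpos
    push_neg at hpos
    refine h ((u.ofLp.2)⁻¹ • u.ofLp.1) fun i => ?_
    have hi := hu i
    rw [WithLp.prod_inner_apply] at hi
    simp only [RCLike.inner_apply, starRingEnd_apply, star_trivial] at hi
    rw [real_inner_smul_right]
    have h2 : r i * u.ofLp.2 ≤ ⟪a i, u.ofLp.1⟫_ℝ := by linarith
    rw [← sub_nonneg] at h2 ⊢
    have : (u.ofLp.2)⁻¹ * ⟪a i, u.ofLp.1⟫_ℝ - r i = (u.ofLp.2)⁻¹ * (⟪a i, u.ofLp.1⟫_ℝ - r i * u.ofLp.2) := by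
      field_simp
    rw [this]
    positivity
  obtain ⟨l, hl, hc⟩ := farkas' w c hf
  have := congrArg (WithLp.linearEquiv 2 ℝ (H × ℝ)) hc
  rw [map_sum] at this
  simp only [map_smul] at this
  have h1 := congrArg Prod.fst this
  have h2 := congrArg Prod.snd this
  rw [Prod.fst_sum] at h1
  rw [Prod.snd_sum] at h2
  refine ⟨l, hl, ?_, ?_⟩
  · simpa [w, c, WithLp.linearEquiv] using h1.symm
  · have h3 : (-1 : ℝ) = ∑ i, l i * (-(r i)) := by
      simpa [w, c, WithLp.linearEquiv, smul_eq_mul] using h2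
    simp only [mul_neg, Finset.sum_neg_distrib] at h3
    linarith

end Farkas

def toEuc {ι : Type*} [Fintype ι] (x : ι → ℝ) : EuclideanSpace ℝ ι := WithLp.toLp 2 x

lemma euc_inner {ι : Type*} [Fintype ι] (x y : ι → ℝ) :
    ⟪toEuc x, toEuc y⟫_ℝ = ∑ i, x i * y i := by
  simp [toEuc, PiLp.inner_apply, RCLike.inner_apply, mul_comm]

lemma euc_sum_coord {ι κ : Type*} [Fintype ι] [Fintype κ] (f : ι → κ → ℝ) (l : ι → ℝ) (x : κ) :
    (∑ i, l i • toEuc (f i)) x = ∑ i, l i * f i x := by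
  rw [show (∑ i, l i • toEuc (f i)) x = (∑ i, l i • f i) x by simp [toEuc], Finset.sum_apply]
  simp

section Main

variable {J M K : ℕ}

/-- From nonemptyness and boundedness of `{u | Bu ≥ b}`: any `y` can be written as
`Bᵀ β₀` with `β₀ ≤ 0`. -/
lemma exists_beta0 (B : Matrix (Fin M) (Fin J) ℝ) (b : Fin M → ℝ)
    (hne : {u : Fin J → ℝ | ∀ m, b m ≤ B.mulVec u m}.Nonempty)
    (hbd : Bornology.IsBounded {u : Fin J → ℝ | ∀ m, b m ≤ B.mulVec u m})
    (y : Fin J → ℝ) :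
    ∃ β₀ : Fin M → ℝ, (∀ m, β₀ m ≤ 0) ∧ ∀ j, ∑ m, B m j * β₀ m = y j := by
  classical
  obtain ⟨u₀, hu₀⟩ := hne
  obtain ⟨C, hC⟩ := (Metric.isBounded_iff_subset_closedBall 0).1 hbd
  have hC' : ∀ u ∈ {u : Fin J → ℝ | ∀ m, b m ≤ B.mulVec u m}, ‖u‖ ≤ C := by
    intro u hu
    have := hC hu
    simpa [Metric.mem_closedBall] using this
  have hzero : ∀ u : Fin J → ℝ, (∀ m, 0 ≤ ∑ j, B m j * u j) → u = 0 := by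
    intro u hu
    by_contra hu0
    have : ∃ j, u j ≠ 0 := by
      by_contra hall
      push_neg at hall
      exact hu0 (funext hall)
    obtain ⟨j, hj⟩ := this
    set t : ℝ := (C + ‖u₀‖ + 1) / |u j| with ht
    have habs : 0 < |u j| := abs_pos.2 hj
    have hCpos : 0 ≤ C := le_trans (norm_nonneg u₀) (hC' u₀ hu₀)
    have ht0 : 0 ≤ t := by positivity
    have hmem : u₀ + t • u ∈ {u : Fin J → ℝ | ∀ m, b m ≤ B.mulVec u m} := by
      intro m
      rw [Matrix.mulVec_add, Matrix.mulVec_smul]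
      have h1 : B.mulVec u m = ∑ j, B m j * u j := rfl
      have h2 : (0:ℝ) ≤ t * ∑ j, B m j * u j := mul_nonneg ht0 (hu m)
      have := hu₀ m
      simp only [Pi.add_apply, Pi.smul_apply, smul_eq_mul]
      rw [← h1] at h2
      linarith
    have hnorm := hC' _ hmem
    have hcoord : |(u₀ + t • u) j| ≤ ‖u₀ + t • u‖ := by
      simpa [Real.norm_eq_abs] using norm_le_pi_norm (u₀ + t • u) j
    have h1 : t * |u j| - |u₀ j| ≤ |(u₀ + t • u) j| := by
      have : |t * u j| - |u₀ j| ≤ |u₀ j + t * u j| := by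
        have := abs_add_le (u₀ j) (t * u j)
        have h2 := abs_sub_abs_le_abs_sub (t * u j) (-(u₀ j))
        simp only [abs_neg] at h2
        calc |t * u j| - |u₀ j| ≤ |t * u j - -(u₀ j)| := h2
          _ = |u₀ j + t * u j| := by rw [show t * u j - -(u₀ j) = u₀ j + t * u j from by ring]
      simpa [abs_mul, abs_of_nonneg ht0] using this
    have h2 : t * |u j| = C + ‖u₀‖ + 1 := by
      rw [ht]; field_simp
    have h3 : |u₀ j| ≤ ‖u₀‖ := by
      simpa [Real.norm_eq_abs] using norm_le_pi_norm u₀ j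
    linarith
  -- apply Farkas
  have hyp : ∀ u : EuclideanSpace ℝ (Fin J),
      (∀ m, 0 ≤ ⟪toEuc (fun j => B m j), u⟫_ℝ) → 0 ≤ ⟪toEuc (fun j => -(y j)), u⟫_ℝ := by
    intro u hu
    have h0 : (fun j => (u : Fin J → ℝ) j) = 0 := by
      apply hzero
      intro m
      have h' : ⟪toEuc (fun j => B m j), u⟫_ℝ = ∑ j, B m j * u j := euc_inner (fun j => B m j) u
      have := hu m
      rwa [h'] at this
    have he : ⟪toEuc (fun j => -(y j)), u⟫_ℝ = ∑ j, -(y j) * u j := euc_inner _ u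
    rw [he]
    have : ∀ j, (u : Fin J → ℝ) j = 0 := fun j => congrFun h0 j
    simp [this]
  obtain ⟨l, hl, hc⟩ := farkas' (fun m => toEuc (fun j => B m j)) (toEuc (fun j => -(y j))) hyp
  refine ⟨fun m => -(l m), fun m => neg_nonpos.2 (hl m), fun j => ?_⟩
  have := congrArg (fun z : EuclideanSpace ℝ (Fin J) => z j) hc
  simp only at this
  rw [euc_sum_coord (fun m => (fun j => B m j)) l j] at this
  have h1 : toEuc (fun j => -(y j)) j = -(y j) := rfl
  rw [h1] at this
  have h2 : ∑ m, B m j * -(l m) = -∑ m, l m * B m j := by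
    rw [← Finset.sum_neg_distrib]
    exact Finset.sum_congr rfl fun m _ => by ring
  rw [h2, ← this]
  ring

lemma weak_dual (B : Matrix (Fin M) (Fin J) ℝ) (b : Fin M → ℝ) (Γ : ℝ)
    (d : Fin K → Fin J → ℝ) (s : Fin K → ℤ) (y : Fin J → ℝ)
    (u : Fin J → ℝ) (ε : Fin K → ℝ) (hε : ∀ κ, 0 ≤ ε κ) (hεΓ : (∑ κ, ε κ) ≤ Γ)
    (hcons : ∀ κ, 0 ≤ (s κ : ℝ) * (∑ j, u j * d κ j) + ε κ)
    (hB : ∀ m, b m ≤ B.mulVec u m)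
    (α : Fin K → ℝ) (β : Fin M → ℝ) (μ : ℝ)
    (hα : ∀ κ, α κ ≤ 0) (hβ : ∀ m, β m ≤ 0) (hμ : 0 ≤ μ)
    (heq : ∀ j, (∑ κ, (s κ : ℝ) * α κ * d κ j) + (∑ m, B m j * β m) = y j)
    (hαμ : ∀ κ, 0 ≤ α κ + μ) :
    (∑ j, u j * y j) ≤ (∑ m, b m * β m) + Γ * μ := by
  have h1 : ∑ j, u j * y j
      = (∑ κ, (s κ : ℝ) * α κ * (∑ j, u j * d κ j)) + ∑ m, β m * (∑ j, B m j * u j) := by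
    calc ∑ j, u j * y j
        = ∑ j, ((∑ κ, u j * ((s κ : ℝ) * α κ * d κ j)) + ∑ m, u j * (B m j * β m)) := by
          refine Finset.sum_congr rfl fun j _ => ?_
          rw [← heq j, mul_add, Finset.mul_sum, Finset.mul_sum]
      _ = (∑ j, ∑ κ, u j * ((s κ : ℝ) * α κ * d κ j)) + ∑ j, ∑ m, u j * (B m j * β m) := by
          rw [Finset.sum_add_distrib]
      _ = (∑ κ, ∑ j, u j * ((s κ : ℝ) * α κ * d κ j)) + ∑ m, ∑ j, u j * (B m j * β m) := by
          rw [Finset.sum_comm, Finset.sum_comm (f := fun j m => u j * (B m j * β m))]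
      _ = (∑ κ, (s κ : ℝ) * α κ * (∑ j, u j * d κ j)) + ∑ m, β m * (∑ j, B m j * u j) := by
          congr 1
          · refine Finset.sum_congr rfl fun κ _ => ?_
            rw [Finset.mul_sum]
            exact Finset.sum_congr rfl fun j _ => by ring
          · refine Finset.sum_congr rfl fun m _ => ?_
            rw [Finset.mul_sum]
            exact Finset.sum_congr rfl fun j _ => by ring
  have hterm1 : ∀ κ, (s κ : ℝ) * α κ * (∑ j, u j * d κ j) ≤ μ * ε κ := by
    intro κ
    have a1 : 0 ≤ (-(α κ)) * ((s κ : ℝ) * (∑ j, u j * d κ j) + ε κ) :=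
      mul_nonneg (neg_nonneg.2 (hα κ)) (hcons κ)
    have a2 : 0 ≤ (α κ + μ) * ε κ := mul_nonneg (hαμ κ) (hε κ)
    nlinarith [a1, a2]
  have hterm2 : ∀ m, β m * (∑ j, B m j * u j) ≤ b m * β m := by
    intro m
    have hBm : b m ≤ ∑ j, B m j * u j := hB m
    have a1 : 0 ≤ (-(β m)) * ((∑ j, B m j * u j) - b m) :=
      mul_nonneg (neg_nonneg.2 (hβ m)) (by linarith)
    nlinarith [a1]
  have h2 : (∑ κ, (s κ : ℝ) * α κ * (∑ j, u j * d κ j)) ≤ ∑ κ, μ * ε κ :=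
    Finset.sum_le_sum fun κ _ => hterm1 κ
  have h3 : (∑ m, β m * (∑ j, B m j * u j)) ≤ ∑ m, b m * β m :=
    Finset.sum_le_sum fun m _ => hterm2 m
  have h4 : (∑ κ, μ * ε κ) = μ * ∑ κ, ε κ := by rw [Finset.mul_sum]
  have h5 : μ * (∑ κ, ε κ) ≤ μ * Γ := mul_le_mul_of_nonneg_left hεΓ hμ
  rw [h1]
  have := h2.trans (h4.le.trans h5)
  linarith

lemma cut_lemma (B : Matrix (Fin M) (Fin J) ℝ) (b : Fin M → ℝ) (Γ : ℝ)
    (d : Fin K → Fin J → ℝ) (s : Fin K → ℤ) (y : Fin J → ℝ) (t : ℝ)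
    (β₀ : Fin M → ℝ) (hβ₀ : ∀ m, β₀ m ≤ 0) (hβ₀y : ∀ j, ∑ m, B m j * β₀ m = y j)
    (hcut : ∀ u : Fin J → ℝ, ∀ ε : Fin K → ℝ, (∀ κ, 0 ≤ ε κ) → (∑ κ, ε κ) ≤ Γ →
      (∀ κ, 0 ≤ (s κ : ℝ) * (∑ j, u j * d κ j) + ε κ) → (∀ m, b m ≤ B.mulVec u m) →
      (∑ j, u j * y j) < t) :
    ∃ α : Fin K → ℝ, ∃ β : Fin M → ℝ, ∃ μ : ℝ,
      (∀ κ, α κ ≤ 0) ∧ (∀ m, β m ≤ 0) ∧ 0 ≤ μ ∧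
      (∀ j, (∑ κ, (s κ : ℝ) * α κ * d κ j) + (∑ m, B m j * β m) = y j) ∧
      (∀ κ, 0 ≤ α κ + μ) ∧ (∑ m, b m * β m) + Γ * μ ≤ t := by
  classical
  set ι := Fin M ⊕ (Fin K ⊕ (Fin K ⊕ (Unit ⊕ Unit))) with hι
  let av : ι → (Fin J ⊕ Fin K) → ℝ := fun i =>
    match i with
    | .inl m => Sum.elim (fun j => B m j) (fun _ => 0)
    | .inr (.inl κ) => Sum.elim (fun j => (s κ : ℝ) * d κ j) (fun κ' => if κ' = κ then 1 else 0)
    | .inr (.inr (.inl κ)) => Sum.elim (fun _ => 0) (fun κ' => if κ' = κ then 1 else 0)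
    | .inr (.inr (.inr (.inl _))) => Sum.elim (fun _ => 0) (fun _ => -1)
    | .inr (.inr (.inr (.inr _))) => Sum.elim y (fun _ => 0)
  let rv : ι → ℝ := fun i =>
    match i with
    | .inl m => b m
    | .inr (.inl _) => 0
    | .inr (.inr (.inl _)) => 0
    | .inr (.inr (.inr (.inl _))) => -Γ
    | .inr (.inr (.inr (.inr _))) => t
  -- inner products with a point z, viewed as (u, ε)
  have hinner : ∀ (i : ι) (z : EuclideanSpace ℝ (Fin J ⊕ Fin K)),
      ⟪toEuc (av i), z⟫_ℝ = ∑ x : Fin J ⊕ Fin K, av i x * z x := fun i z => euc_inner (av i) z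
  have hinf : ∀ z : EuclideanSpace ℝ (Fin J ⊕ Fin K), ¬ (∀ i, rv i ≤ ⟪toEuc (av i), z⟫_ℝ) := by
    intro z hz
    set u : Fin J → ℝ := fun j => z (Sum.inl j) with hu
    set ε : Fin K → ℝ := fun κ => z (Sum.inr κ) with hε
    have h1 : ∀ m, b m ≤ B.mulVec u m := by
      intro m
      have h := (hinner (Sum.inl m) z) ▸ hz (Sum.inl m)
      rw [Fintype.sum_sum_type] at h
      simp only [av, Sum.elim_inl, Sum.elim_inr, zero_mul, Finset.sum_const_zero, add_zero] at h
      exact h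
    have h2 : ∀ κ, 0 ≤ (s κ : ℝ) * (∑ j, u j * d κ j) + ε κ := by
      intro κ
      have h := (hinner (Sum.inr (Sum.inl κ)) z) ▸ hz (Sum.inr (Sum.inl κ))
      rw [Fintype.sum_sum_type] at h
      simp only [av, Sum.elim_inl, Sum.elim_inr, ite_mul, one_mul, zero_mul,
        Finset.sum_ite_eq', Finset.mem_univ, if_true] at h
      have e : ∑ j, (s κ : ℝ) * d κ j * z (Sum.inl j) = (s κ : ℝ) * ∑ j, u j * d κ j := by
        rw [Finset.mul_sum]
        exact Finset.sum_congr rfl fun j _ => by rw [hu]; ring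
      rw [e] at h
      exact h
    have h3 : ∀ κ, 0 ≤ ε κ := by
      intro κ
      have h := (hinner (Sum.inr (Sum.inr (Sum.inl κ))) z) ▸ hz (Sum.inr (Sum.inr (Sum.inl κ)))
      rw [Fintype.sum_sum_type] at h
      simpa only [av, Sum.elim_inl, Sum.elim_inr, ite_mul, one_mul, zero_mul,
        Finset.sum_ite_eq', Finset.mem_univ, if_true, Finset.sum_const_zero, zero_add] using h
    have h4 : (∑ κ, ε κ) ≤ Γ := by
      have h := (hinner (Sum.inr (Sum.inr (Sum.inr (Sum.inl ())))) z) ▸ hz (Sum.inr (Sum.inr (Sum.inr (Sum.inl ()))))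
      rw [Fintype.sum_sum_type] at h
      simp only [av, rv, Sum.elim_inl, Sum.elim_inr, zero_mul, Finset.sum_const_zero,
        zero_add, neg_mul, one_mul, Finset.sum_neg_distrib] at h
      linarith
    have h5 := (hinner (Sum.inr (Sum.inr (Sum.inr (Sum.inr ())))) z) ▸ hz (Sum.inr (Sum.inr (Sum.inr (Sum.inr ()))))
    rw [Fintype.sum_sum_type] at h5
    simp only [av, rv, Sum.elim_inl, Sum.elim_inr, zero_mul, Finset.sum_const_zero,
      add_zero] at h5
    have h6 : ∑ j, y j * z (Sum.inl j) = ∑ j, u j * y j :=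
      Finset.sum_congr rfl fun j _ => by rw [hu]; ring
    rw [h6] at h5
    exact absurd (hcut u ε h3 h4 h2 h1) (not_lt.2 h5)
  -- unpack the Gale certificate
  obtain ⟨l, hl, hvec, hsc⟩ := gale (fun i : ι => toEuc (av i)) rv hinf
  set lB : Fin M → ℝ := fun m => l (Sum.inl m) with hlB
  set lA : Fin K → ℝ := fun κ => l (Sum.inr (Sum.inl κ)) with hlA
  set lR : Fin K → ℝ := fun κ => l (Sum.inr (Sum.inr (Sum.inl κ))) with hlR
  set lM : ℝ := l (Sum.inr (Sum.inr (Sum.inr (Sum.inl ())))) with hlM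
  set lP : ℝ := l (Sum.inr (Sum.inr (Sum.inr (Sum.inr ())))) with hlP
  have hco : ∀ x : Fin J ⊕ Fin K, (∑ i, l i * av i x) = 0 := by
    intro x
    have h := congrArg (fun z : EuclideanSpace ℝ (Fin J ⊕ Fin K) => z x) hvec
    simp only at h
    rw [euc_sum_coord av l x] at h
    exact h
  have EJ : ∀ j, (∑ m, lB m * B m j) + (∑ κ, lA κ * ((s κ : ℝ) * d κ j)) + lP * y j = 0 := by
    intro j
    have h := hco (Sum.inl j)
    rw [Fintype.sum_sum_type, Fintype.sum_sum_type, Fintype.sum_sum_type,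
      Fintype.sum_sum_type] at h
    simp only [av, Sum.elim_inl, mul_zero, Finset.sum_const_zero, add_zero, zero_add,
      Finset.univ_unique, PUnit.default_eq_unit, Finset.sum_singleton] at h
    linarith [h]
  have EK : ∀ κ, lA κ + lR κ - lM = 0 := by
    intro κ
    have h := hco (Sum.inr κ)
    rw [Fintype.sum_sum_type, Fintype.sum_sum_type, Fintype.sum_sum_type,
      Fintype.sum_sum_type] at h
    simp only [av, Sum.elim_inr, mul_zero, mul_ite, mul_one, Finset.sum_ite_eq,
      Finset.mem_univ, if_true, Finset.sum_const_zero, zero_add, add_zero, mul_neg, mul_one,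
      Finset.univ_unique, PUnit.default_eq_unit, Finset.sum_singleton] at h
    linarith [h]
  have ES : (∑ m, lB m * b m) + (lM * (-Γ) + lP * t) = 1 := by
    rw [Fintype.sum_sum_type, Fintype.sum_sum_type, Fintype.sum_sum_type,
      Fintype.sum_sum_type] at hsc
    simpa only [rv, mul_zero, Finset.sum_const_zero, add_zero, zero_add,
      Finset.univ_unique, PUnit.default_eq_unit, Finset.sum_singleton] using hsc
  have hlM0 : 0 ≤ lM := hl _
  have hlP0 : 0 ≤ lP := hl _
  have hlA0 : ∀ κ, 0 ≤ lA κ := fun κ => hl _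
  have hlB0 : ∀ m, 0 ≤ lB m := fun m => hl _
  have hlR0 : ∀ κ, 0 ≤ lR κ := fun κ => hl _
  clear_value lB lA lR lM lP
  clear hco hvec hsc hl hinner
  rcases eq_or_lt_of_le hlP0 with hp0 | hppos
  · -- λ₊ = 0 : unbounded ray added to the base dual point β₀
    set c : ℝ := max 0 ((∑ m, b m * β₀ m) - t) with hcdef
    have hc0 : 0 ≤ c := le_max_left _ _
    have hct : (∑ m, b m * β₀ m) - t ≤ c := le_max_right _ _
    refine ⟨fun κ => c * (-(lA κ)), fun m => β₀ m + c * (-(lB m)), c * lM, ?_, ?_, ?_, ?_, ?_, ?_⟩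
    · intro κ
      show c * (-(lA κ)) ≤ 0
      have h1 := mul_nonneg hc0 (hlA0 κ)
      nlinarith
    · intro m
      show β₀ m + c * (-(lB m)) ≤ 0
      have h1 := mul_nonneg hc0 (hlB0 m)
      have h2 := hβ₀ m
      nlinarith
    · exact mul_nonneg hc0 hlM0
    · intro j
      have EJ' : (∑ m, lB m * B m j) + (∑ κ, lA κ * ((s κ : ℝ) * d κ j)) = 0 := by
        have := EJ j
        rw [← hp0] at this
        linarith
      have e1 : ∑ κ, (s κ : ℝ) * (c * (-(lA κ))) * d κ j
          = (-c) * ∑ κ, lA κ * ((s κ : ℝ) * d κ j) := by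
        rw [Finset.mul_sum]
        exact Finset.sum_congr rfl fun κ _ => by ring
      have e2 : ∑ m, B m j * (β₀ m + c * (-(lB m)))
          = (∑ m, B m j * β₀ m) + (-c) * ∑ m, lB m * B m j := by
        rw [Finset.mul_sum, ← Finset.sum_add_distrib]
        exact Finset.sum_congr rfl fun m _ => by ring
      rw [e1, e2, hβ₀y j]
      nlinarith [EJ']
    · intro κ
      have e : c * (-(lA κ)) + c * lM = c * lR κ := by
        have := EK κ
        nlinarith
      rw [e]
      exact mul_nonneg hc0 (hlR0 κ)
    · have ES' : (∑ m, lB m * b m) - lM * Γ = 1 := by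
        have := ES
        rw [← hp0] at this
        linarith
      have e3 : ∑ m, b m * (β₀ m + c * (-(lB m)))
          = (∑ m, b m * β₀ m) + (-c) * ∑ m, lB m * b m := by
        rw [Finset.mul_sum, ← Finset.sum_add_distrib]
        exact Finset.sum_congr rfl fun m _ => by ring
      rw [e3]
      nlinarith [ES']
  · -- λ₊ > 0 : scale to a dual point with value ≤ t
    have hne : lP ≠ 0 := ne_of_gt hppos
    refine ⟨fun κ => -(lA κ) / lP, fun m => -(lB m) / lP, lM / lP, ?_, ?_, ?_, ?_, ?_, ?_⟩
    · intro κ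
      exact div_nonpos_of_nonpos_of_nonneg (neg_nonpos.2 (hlA0 κ)) hlP0
    · intro m
      exact div_nonpos_of_nonpos_of_nonneg (neg_nonpos.2 (hlB0 m)) hlP0
    · exact div_nonneg hlM0 hlP0
    · intro j
      have e1 : ∑ κ, (s κ : ℝ) * (-(lA κ) / lP) * d κ j
          = (-1 / lP) * ∑ κ, lA κ * ((s κ : ℝ) * d κ j) := by
        rw [Finset.mul_sum]
        exact Finset.sum_congr rfl fun κ _ => by ring
      have e2 : ∑ m, B m j * (-(lB m) / lP)
          = (-1 / lP) * ∑ m, lB m * B m j := by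
        rw [Finset.mul_sum]
        exact Finset.sum_congr rfl fun m _ => by ring
      rw [e1, e2]
      have hEJ := EJ j
      generalize hSM : (∑ m, lB m * B m j) = SM at hEJ ⊢
      generalize hSK : (∑ κ, lA κ * ((s κ : ℝ) * d κ j)) = SK at hEJ ⊢
      field_simp
      nlinarith [hEJ]
    · intro κ
      have e : -(lA κ) / lP + lM / lP = lR κ / lP := by
        rw [← add_div]
        congr 1
        have := EK κ
        linarith
      rw [e]
      exact div_nonneg (hlR0 κ) hlP0
    · have e3 : ∑ m, b m * (-(lB m) / lP) = (-1 / lP) * ∑ m, lB m * b m := by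
        rw [Finset.mul_sum]
        exact Finset.sum_congr rfl fun m _ => by ring
      rw [e3]
      have hES := ES
      generalize hSB : (∑ m, lB m * b m) = SB at hES ⊢
      have e4 : (-1 / lP) * SB + Γ * (lM / lP) = (lP * t - 1) / lP := by
        field_simp
        nlinarith [hES]
      rw [e4, div_le_iff₀ hppos]
      nlinarith

end Main

set_option maxHeartbeats 2000000 in
theorem inner_max_regret_strong_duality
    {J M K : ℕ} (B : Matrix (Fin M) (Fin J) ℝ) (b : Fin M → ℝ)
    (hne : {u : Fin J → ℝ | ∀ m, b m ≤ B.mulVec u m}.Nonempty)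
    (hbd : Bornology.IsBounded {u : Fin J → ℝ | ∀ m, b m ≤ B.mulVec u m})
    (Γ : ℝ) (hΓ : 0 ≤ Γ) (d : Fin K → Fin J → ℝ)
    (s : Fin K → ℤ) (hs : ∀ κ, s κ = -1 ∨ s κ = 1)
    (y : Fin J → ℝ) :
    (⨆ u ∈ {u : Fin J → ℝ | (∃ ε : Fin K → ℝ, (∀ κ, 0 ≤ ε κ) ∧ (∑ κ, ε κ) ≤ Γ ∧
          ∀ κ, 0 ≤ (s κ : ℝ) * (∑ j, u j * d κ j) + ε κ) ∧
          ∀ m, b m ≤ B.mulVec u m},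
        ((∑ j, u j * y j : ℝ) : EReal))
      = ⨅ p ∈ {p : (Fin K → ℝ) × (Fin M → ℝ) × ℝ |
            (∀ κ, p.1 κ ≤ 0) ∧ (∀ m, p.2.1 m ≤ 0) ∧ 0 ≤ p.2.2 ∧
            (∀ j, (∑ κ, (s κ : ℝ) * p.1 κ * d κ j) + (∑ m, B m j * p.2.1 m) = y j) ∧
            ∀ κ, 0 ≤ p.1 κ + p.2.2},
        (((∑ m, b m * p.2.1 m) + Γ * p.2.2 : ℝ) : EReal) := by
  obtain ⟨β₀, hβ₀, hβ₀y⟩ := exists_beta0 B b hne hbd y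
  apply le_antisymm
  · refine iSup₂_le fun u hu => le_iInf₂ fun p hp => ?_
    obtain ⟨⟨ε, hε, hεΓ, hcons⟩, hB⟩ := hu
    obtain ⟨hα, hβ, hμ, heqj, hαμ⟩ := hp
    exact_mod_cast weak_dual B b Γ d s y u ε hε hεΓ hcons hB p.1 p.2.1 p.2.2 hα hβ hμ heqj hαμ
  · by_contra hlt
    push_neg at hlt
    obtain ⟨t, h1, h2⟩ := EReal.exists_between_coe_real hlt
    have hcut : ∀ u : Fin J → ℝ, ∀ ε : Fin K → ℝ, (∀ κ, 0 ≤ ε κ) → (∑ κ, ε κ) ≤ Γ →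
        (∀ κ, 0 ≤ (s κ : ℝ) * (∑ j, u j * d κ j) + ε κ) → (∀ m, b m ≤ B.mulVec u m) →
        (∑ j, u j * y j) < t := by
      intro u ε hε hεΓ hcons hB
      have hmem : u ∈ {u : Fin J → ℝ | (∃ ε : Fin K → ℝ, (∀ κ, 0 ≤ ε κ) ∧ (∑ κ, ε κ) ≤ Γ ∧
          ∀ κ, 0 ≤ (s κ : ℝ) * (∑ j, u j * d κ j) + ε κ) ∧
          ∀ m, b m ≤ B.mulVec u m} := ⟨⟨ε, hε, hεΓ, hcons⟩, hB⟩
      have hle : ((∑ j, u j * y j : ℝ) : EReal)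
          ≤ ⨆ u ∈ {u : Fin J → ℝ | (∃ ε : Fin K → ℝ, (∀ κ, 0 ≤ ε κ) ∧ (∑ κ, ε κ) ≤ Γ ∧
              ∀ κ, 0 ≤ (s κ : ℝ) * (∑ j, u j * d κ j) + ε κ) ∧
              ∀ m, b m ≤ B.mulVec u m},
            ((∑ j, u j * y j : ℝ) : EReal) :=
        le_iSup₂ (f := fun u _ => ((∑ j, u j * y j : ℝ) : EReal)) u hmem
      exact_mod_cast hle.trans_lt h1
    obtain ⟨α, β, μ, hα, hβ, hμ, heqj, hαμ, hobj⟩ := cut_lemma B b Γ d s y t β₀ hβ₀ hβ₀y hcut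
    have hDle : (⨅ p ∈ {p : (Fin K → ℝ) × (Fin M → ℝ) × ℝ |
            (∀ κ, p.1 κ ≤ 0) ∧ (∀ m, p.2.1 m ≤ 0) ∧ 0 ≤ p.2.2 ∧
            (∀ j, (∑ κ, (s κ : ℝ) * p.1 κ * d κ j) + (∑ m, B m j * p.2.1 m) = y j) ∧
            ∀ κ, 0 ≤ p.1 κ + p.2.2},
          (((∑ m, b m * p.2.1 m) + Γ * p.2.2 : ℝ) : EReal))
        ≤ (((∑ m, b m * β m) + Γ * μ : ℝ) : EReal) := by
      refine iInf₂_le (α, β, μ) ?_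
      exact ⟨hα, hβ, hμ, heqj, hαμ⟩
    have hfin : (((∑ m, b m * β m) + Γ * μ : ℝ) : EReal) ≤ ((t : ℝ) : EReal) := by
      exact_mod_cast hobj
    exact absurd (hDle.trans hfin) (not_le.2 h2)
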